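/- Let N be a positive integer coprime to 3 and r coprime to N. Then the number of solutions (a, b) ∈ (ℤ/Nℤ)² to a² + ab + b² = −r equals N · ∏_{p | N} (1 − (1/p)·((−3/p))), where ((−3/p)) denotes the Kronecker symbol of −3 modulo p (so ((−3/2)) = −1). -/

import Mathlib

open scoped Classical
open Finset

noncomputable def cnt (n : ℕ) (r : ℤ) : ℕ :=
  Nat.card {v : ZMod n × ZMod n // v.1 ^ 2 + v.1 * v.2 + v.2 ^ 2 = -(r : ZMod n)}

noncomputable def eps (p : ℕ) : ℤ :=
  if p = 2 then -1 else if IsSquare (-3 : ZMod p) then 1 else -1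

theorem cnt_one (r : ℤ) : cnt 1 r = 1 := by
  have h : ∀ v : ZMod 1 × ZMod 1, v.1 ^ 2 + v.1 * v.2 + v.2 ^ 2 = -(r : ZMod 1) :=
    fun v => Subsingleton.elim _ _
  rw [cnt, Nat.card_congr (Equiv.subtypeUnivEquiv h), Nat.card_prod]
  simp [Nat.card_eq_fintype_card]

theorem cnt_mul (m n : ℕ) (h : Nat.Coprime m n) (r : ℤ) :
    cnt (m * n) r = cnt m r * cnt n r := by
  classical
  let f := ZMod.chineseRemainder h
  have key : ∀ v : ZMod (m*n) × ZMod (m*n),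
      (v.1 ^ 2 + v.1 * v.2 + v.2 ^ 2 = -(r : ZMod (m*n))) ↔
      (((f v.1).1 ^ 2 + (f v.1).1 * (f v.2).1 + (f v.2).1 ^ 2 = -(r : ZMod m)) ∧
       ((f v.1).2 ^ 2 + (f v.1).2 * (f v.2).2 + (f v.2).2 ^ 2 = -(r : ZMod n))) := by
    intro v
    rw [← f.injective.eq_iff]
    rw [map_add, map_add, map_mul, map_pow, map_pow, map_neg, map_intCast, Prod.ext_iff]
    simp [Prod.fst_mul, Prod.snd_mul, Prod.fst_add, Prod.snd_add, Prod.pow_fst, Prod.pow_snd]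
  let g : (ZMod (m*n) × ZMod (m*n)) ≃ (ZMod m × ZMod m) × (ZMod n × ZMod n) :=
    { toFun := fun v => (((f v.1).1, (f v.2).1), ((f v.1).2, (f v.2).2))
      invFun := fun w => (f.symm (w.1.1, w.2.1), f.symm (w.1.2, w.2.2))
      left_inv := fun v => by simp
      right_inv := fun w => by simp }
  have e : {v : ZMod (m*n) × ZMod (m*n) // v.1 ^ 2 + v.1 * v.2 + v.2 ^ 2 = -(r : ZMod (m*n))} ≃
      {w : (ZMod m × ZMod m) × (ZMod n × ZMod n) //
        (fun a : ZMod m × ZMod m => a.1 ^ 2 + a.1 * a.2 + a.2 ^ 2 = -(r : ZMod m)) w.1 ∧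
        (fun b : ZMod n × ZMod n => b.1 ^ 2 + b.1 * b.2 + b.2 ^ 2 = -(r : ZMod n)) w.2} :=
    (Equiv.subtypeEquiv g (by intro v; exact key v))
  rw [cnt, Nat.card_congr (e.trans (Equiv.subtypeProdEquivProd (p := fun a : ZMod m × ZMod m => a.1 ^ 2 + a.1 * a.2 + a.2 ^ 2 = -(r : ZMod m)) (q := fun b : ZMod n × ZMod n => b.1 ^ 2 + b.1 * b.2 + b.2 ^ 2 = -(r : ZMod n)))), Nat.card_prod]
  rfl

variable {F : Type*} [Field F] [Fintype F] [DecidableEq F]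

theorem charsum (hF : ringChar F ≠ 2) {a b : F} (ha : a ≠ 0) (hb : b ≠ 0) :
    ∑ x : F, quadraticChar F (b + a * x ^ 2) = - quadraticChar F a := by
  classical
  have affsum : ∀ c d : F, d ≠ 0 → ∑ u : F, quadraticChar F (c + d * u) = 0 := by
    intro c d hd
    rw [← quadraticChar_sum_zero hF]
    apply Fintype.sum_equiv ((Equiv.mulLeft₀ d hd).trans (Equiv.addLeft c))
    intro u; rfl
  have hfib : ∀ u : F, ((univ.filter fun x : F => x ^ 2 = u).card : ℤ)
      = quadraticChar F u + 1 := by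
    intro u
    rw [← quadraticChar_card_sqrts hF u]
    congr 1
    simp [Set.toFinset_setOf]
  have step1 : ∑ x : F, quadraticChar F (b + a * x ^ 2)
      = ∑ u : F, (quadraticChar F u + 1) * quadraticChar F (b + a * u) := by
    rw [← Finset.sum_fiberwise univ (fun x : F => x ^ 2)
      (fun x => quadraticChar F (b + a * x ^ 2))]
    refine Finset.sum_congr rfl fun u _ => ?_
    have : ∀ x ∈ univ.filter fun x : F => x ^ 2 = u,
        quadraticChar F (b + a * x ^ 2) = quadraticChar F (b + a * u) := by
      intro x hx
      rw [Finset.mem_filter] at hx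
      rw [hx.2]
    rw [Finset.sum_congr rfl this, Finset.sum_const, ← hfib u]
    simp [mul_comm]
  have h2 : ∑ u : F, quadraticChar F (b + a * u) = 0 := affsum b a ha
  have h3 : ∑ u : F, quadraticChar F u * quadraticChar F (b + a * u)
      = - quadraticChar F a := by
    have key : ∀ u : F, u ≠ 0 →
        quadraticChar F u * quadraticChar F (b + a * u)
          = quadraticChar F (a + b * u⁻¹) := by
      intro u hu
      rw [← map_mul]
      have h : u * (b + a * u) = u ^ 2 * (a + b * u⁻¹) := by
        field_simp; ring
      rw [h, map_mul, map_pow]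
      rw [quadraticChar_sq_one hu, one_mul]
    have h0 : (0 : F) ∈ (univ : Finset F) := mem_univ 0
    rw [← Finset.add_sum_erase univ _ h0]
    rw [MulChar.map_zero, zero_mul, zero_add]
    have : ∑ u ∈ univ.erase (0 : F), quadraticChar F u * quadraticChar F (b + a * u)
        = ∑ u ∈ univ.erase (0 : F), quadraticChar F (a + b * u⁻¹) :=
      Finset.sum_congr rfl fun u hu => key u (Finset.ne_of_mem_erase hu)
    rw [this]
    have hinv : ∑ u ∈ univ.erase (0 : F), quadraticChar F (a + b * u⁻¹)
        = ∑ u ∈ univ.erase (0 : F), quadraticChar F (a + b * u) := by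
      apply Finset.sum_nbij' (fun u => u⁻¹) (fun u => u⁻¹)
      · intro u hu; simp_all
      · intro u hu; simp_all
      · intro u hu; simp
      · intro u hu; simp
      · intro u hu; simp
    rw [hinv, Finset.sum_erase_eq_sub h0, affsum a b hb]
    simp
  rw [step1]
  simp only [add_mul, one_mul, Finset.sum_add_distrib, h2, h3]
  ring

theorem card_sol (hF : ringChar F ≠ 2) (h3 : (-3 : F) ≠ 0) {c : F} (hc : c ≠ 0) :
    (Fintype.card {v : F × F // v.1 ^ 2 + v.1 * v.2 + v.2 ^ 2 = c} : ℤ)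
      = Fintype.card F - quadraticChar F (-3) := by
  classical
  have h2 : (2 : F) ≠ 0 := Ring.two_ne_zero hF
  have h4 : (4 : F) ≠ 0 := by
    intro h; apply h2; have : (4 : F) = 2 * 2 := by norm_num
    rw [this] at h; exact (mul_self_eq_zero).mp h
  have hfib : ∀ u : F, (Fintype.card {z : F // z ^ 2 = u} : ℤ)
      = quadraticChar F u + 1 := by
    intro u
    rw [← quadraticChar_card_sqrts hF u]
    congr 1
    rw [Fintype.card_subtype]
    congr 1
    simp [Set.toFinset_setOf]
  -- slice by first coordinate
  have e1 := Equiv.subtypeProdEquivSigmaSubtype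
    (fun x y : F => x ^ 2 + x * y + y ^ 2 = c)
  rw [Fintype.card_congr e1, Fintype.card_sigma]
  -- for fixed a, count y
  have key : ∀ a : F, (Fintype.card {y : F // a ^ 2 + a * y + y ^ 2 = c} : ℤ)
      = quadraticChar F (4 * c + (-3) * a ^ 2) + 1 := by
    intro a
    rw [← hfib]
    congr 1
    apply Fintype.card_congr
    apply Equiv.subtypeEquiv ((Equiv.mulLeft₀ 2 h2).trans (Equiv.addRight a))
    intro y
    simp only [Equiv.trans_apply, Equiv.mulLeft₀_apply, Equiv.coe_addRight]
    constructor
    · intro h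
      have : (2 * y + a) ^ 2 - (4 * c + (-3) * a ^ 2) = 4 * (a ^ 2 + a * y + y ^ 2 - c) := by ring
      rw [h] at this; simp at this
      linear_combination this
    · intro h
      have h' : (2 * y + a) ^ 2 - (4 * c + (-3) * a ^ 2) = 4 * (a ^ 2 + a * y + y ^ 2 - c) := by ring
      rw [h, sub_self] at h'
      have := (mul_eq_zero.mp h'.symm).resolve_left h4
      linear_combination this
  push_cast
  rw [Finset.sum_congr rfl (fun a _ => key a)]
  rw [Finset.sum_add_distrib, Finset.sum_const, charsum hF (by exact h3) (by
    intro h; exact hc (by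
      have : (4:F) * c = 0 := h
      rcases mul_eq_zero.mp this with h' | h'
      · exact absurd h' h4
      · exact h'))]
  simp [Finset.card_univ]
  ring

theorem zmod2_cases : ∀ x : ZMod 2, x ≠ 0 → x = 1 := by decide

theorem card3 :
    Fintype.card {v : ZMod 2 × ZMod 2 // v.1 ^ 2 + v.1 * v.2 + v.2 ^ 2 = (1 : ZMod 2)} = 3 := by
  decide

theorem cnt_prime' (p : ℕ) (hp : p.Prime) (h3 : ¬ p ∣ 3) {r : ℤ} (hr : ¬ (p:ℤ) ∣ r) :
    (cnt p r : ℤ) = p - eps p := by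
  haveI : Fact p.Prime := ⟨hp⟩
  by_cases h2 : p = 2
  · subst h2
    have hrodd : (r : ZMod 2) = 1 := by
      have h0 : (r : ZMod 2) ≠ 0 := fun h => hr ((ZMod.intCast_zmod_eq_zero_iff_dvd r 2).mp h)
      exact zmod2_cases _ h0
    have : cnt 2 r = 3 := by
      rw [cnt, hrodd, Nat.card_eq_fintype_card]
      have hneg : -(1 : ZMod 2) = 1 := rfl
      rw [hneg]
      exact card3
    rw [this, eps, if_pos rfl]
    norm_num
  · have hodd : ringChar (ZMod p) ≠ 2 := by
      rw [ZMod.ringChar_zmod_n]; exact h2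
    have h3' : (-3 : ZMod p) ≠ 0 := by
      intro h
      rw [neg_eq_zero] at h
      have : ((3 : ℕ) : ZMod p) = 0 := by push_cast; exact h
      exact h3 ((ZMod.natCast_eq_zero_iff 3 p).mp this)
    have hc : -(r : ZMod p) ≠ 0 := by
      rw [neg_ne_zero]
      intro h
      exact hr ((ZMod.intCast_zmod_eq_zero_iff_dvd r p).mp h)
    rw [cnt, Nat.card_eq_fintype_card, card_sol hodd h3' hc, ZMod.card, eps, if_neg h2]
    congr 1
    by_cases hs : IsSquare (-3 : ZMod p)
    · rw [if_pos hs, (quadraticChar_one_iff_isSquare h3').mpr hs]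
    · rw [if_neg hs, (quadraticChar_neg_one_iff_not_isSquare).mpr hs]

theorem affine_card {K : Type*} [Field K] [Fintype K] {α β γ : K}
    (h : ¬ (α = 0 ∧ β = 0)) :
    Fintype.card {u : K × K // α * u.1 + β * u.2 + γ = 0} = Fintype.card K := by
  classical
  by_cases hα : α = 0
  · have hβ : β ≠ 0 := fun hb => h ⟨hα, hb⟩
    subst hα
    have g : Function.Bijective (fun t : K =>
        (⟨(t, -γ / β), by field_simp; try ring⟩ :
          {u : K × K // 0 * u.1 + β * u.2 + γ = 0})) := by
      constructor
      · intro a b hab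
        simpa using congrArg (fun v => v.1.1) hab
      · rintro ⟨⟨x, y⟩, hv⟩
        refine ⟨x, ?_⟩
        have : y = -γ / β := by
          field_simp
          linear_combination hv
        simp [this]
    exact (Fintype.card_of_bijective g).symm
  · have g : Function.Bijective (fun t : K =>
        (⟨((-γ - β * t) / α, t), by field_simp; try ring⟩ :
          {u : K × K // α * u.1 + β * u.2 + γ = 0})) := by
      constructor
      · intro a b hab
        simpa using congrArg (fun v => v.1.2) hab
      · rintro ⟨⟨x, y⟩, hv⟩
        refine ⟨y, ?_⟩
        have : x = (-γ - β * y) / α := by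
          field_simp
          linear_combination hv
        simp [this]
    exact (Fintype.card_of_bijective g).symm


theorem nn_mul_eq_zero (p k : ℕ) (hp : p.Prime) (hk : 1 ≤ k) (x : ZMod (p^(k+1))) :
    ((p^k : ℕ) : ZMod (p^(k+1))) * x = 0 ↔
      (ZMod.castHom (dvd_pow_self p (Nat.succ_ne_zero k)) (ZMod p)) x = 0 := by
  haveI : NeZero (p^(k+1)) := ⟨pow_ne_zero _ hp.ne_zero⟩
  haveI : Fact p.Prime := ⟨hp⟩
  conv_lhs => rw [← ZMod.natCast_rightInverse x]
  rw [← Nat.cast_mul, ZMod.natCast_eq_zero_iff]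
  have hcan : ∀ v : ℕ, (p^(k+1) ∣ p^k * v ↔ p ∣ v) := by
    intro v; rw [pow_succ]; exact mul_dvd_mul_iff_left (pow_ne_zero k hp.ne_zero)
  refine (hcan x.val).trans ?_
  have hrhs : (ZMod.castHom (dvd_pow_self p (Nat.succ_ne_zero k)) (ZMod p)) x
      = ((x.val : ℕ) : ZMod p) :=
    (ZMod.castHom_apply x).trans (ZMod.natCast_val x).symm
  rw [hrhs, ZMod.natCast_eq_zero_iff]


theorem ker_rep (p k : ℕ) (hp : p.Prime) (y : ZMod (p^(k+1)))
    (hy : (ZMod.castHom (pow_dvd_pow p (Nat.le_succ k)) (ZMod (p^k))) y = 0) :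
    ∃ s : ZMod p, y = ((p^k : ℕ) : ZMod (p^(k+1))) * ((s.val : ℕ) : ZMod (p^(k+1))) := by
  haveI : NeZero (p^(k+1)) := ⟨pow_ne_zero _ hp.ne_zero⟩
  haveI : NeZero (p^k) := ⟨pow_ne_zero _ hp.ne_zero⟩
  haveI : Fact p.Prime := ⟨hp⟩
  rw [ZMod.castHom_apply, ← ZMod.natCast_val, ZMod.natCast_eq_zero_iff] at hy
  obtain ⟨d, hd⟩ := hy
  refine ⟨(d : ZMod p), ?_⟩
  have hval : ((d : ZMod p)).val = d % p := ZMod.val_natCast p d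
  conv_lhs => rw [← ZMod.natCast_rightInverse y]
  rw [hval, ← Nat.cast_mul, hd, ZMod.natCast_eq_natCast_iff]
  have h1 : d % p ≡ d [MOD p] := Nat.mod_modEq d p
  have := h1.mul_left' (c := p^k)
  rw [← pow_succ] at this
  exact this.symm

theorem cnt_lift (p : ℕ) (hp : p.Prime) (h3 : ¬ p ∣ 3) {r : ℤ} (hr : ¬ (p:ℤ) ∣ r)
    (k : ℕ) (hk : 1 ≤ k) : cnt (p ^ (k+1)) r = p * cnt (p ^ k) r := by
  classical
  haveI : Fact p.Prime := ⟨hp⟩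
  haveI : NeZero (p^(k+1)) := ⟨pow_ne_zero _ hp.ne_zero⟩
  haveI : NeZero (p^k) := ⟨pow_ne_zero _ hp.ne_zero⟩
  set M := p^(k+1) with hM
  set n := p^k with hn
  let cast1 : ZMod M →+* ZMod n := ZMod.castHom (pow_dvd_pow p (Nat.le_succ k)) _
  let castp : ZMod M →+* ZMod p := ZMod.castHom (dvd_pow_self p (Nat.succ_ne_zero k)) _
  let nn : ZMod M := ((p^k : ℕ) : ZMod M)
  have hcast1nn : cast1 nn = 0 := by
    simp only [nn, map_natCast, cast1]
    exact_mod_cast ZMod.natCast_self (p^k)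
  have hcastpnn : castp nn = 0 := by
    simp only [nn, map_natCast, castp]
    exact_mod_cast (ZMod.natCast_eq_zero_iff _ _).mpr (dvd_pow_self p (by omega))
  have hnn2 : nn * nn = 0 := by
    simp only [nn, ← Nat.cast_mul, ← pow_add]
    exact (ZMod.natCast_eq_zero_iff _ _).mpr (pow_dvd_pow p (by omega))
  have hp3 : (3 : ZMod p) ≠ 0 := by
    intro h
    exact h3 ((ZMod.natCast_eq_zero_iff 3 p).mp (by exact_mod_cast h))
  have hpr : (r : ZMod p) ≠ 0 := fun h => hr ((ZMod.intCast_zmod_eq_zero_iff_dvd r p).mp h)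
  -- the solution sets
  set Sm := {v : ZMod M × ZMod M // v.1 ^ 2 + v.1 * v.2 + v.2 ^ 2 = -(r : ZMod M)} with hSm
  have hcnt : cnt M r = Fintype.card Sm := Nat.card_eq_fintype_card
  set T : Finset (ZMod n × ZMod n) :=
    univ.filter (fun w => w.1 ^ 2 + w.1 * w.2 + w.2 ^ 2 = -(r : ZMod n)) with hT
  have hTcard : T.card = cnt n r := by
    rw [cnt, Nat.card_eq_fintype_card, Fintype.card_subtype]
  let f : Sm → ZMod n × ZMod n := fun v => (cast1 v.1.1, cast1 v.1.2)
  have hmem : ∀ v : Sm, v ∈ (univ : Finset Sm) → f v ∈ T := by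
    rintro ⟨⟨a, b⟩, hv⟩ -
    simp only [T, mem_filter, mem_univ, true_and, f]
    have := congrArg cast1 hv
    simpa [map_add, map_mul, map_pow, map_neg, map_intCast] using this
  have hsplit := Finset.card_eq_sum_card_fiberwise hmem
  -- fiber count
  have hfiber : ∀ w ∈ T, ((univ : Finset Sm).filter (fun v => f v = w)).card = p := by
    rintro ⟨w1, w2⟩ hw
    rw [hT, mem_filter] at hw
    have hw2 := hw.2
    -- lift of w
    set A : ZMod M := ((w1.val : ℕ) : ZMod M) with hA
    set B : ZMod M := ((w2.val : ℕ) : ZMod M) with hB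
    have hcA : cast1 A = w1 := by
      simp only [hA, map_natCast, cast1]
      exact ZMod.natCast_rightInverse w1
    have hcB : cast1 B = w2 := by
      simp only [hB, map_natCast, cast1]
      exact ZMod.natCast_rightInverse w2
    -- the error term
    set e : ZMod M := A ^ 2 + A * B + B ^ 2 + (r : ZMod M) with he
    have hce : cast1 e = 0 := by
      simp only [he, map_add, map_mul, map_pow, map_intCast, hcA, hcB]
      rw [hw2]; ring
    obtain ⟨γ, hγ⟩ := ker_rep p k hp e hce
    rw [show ((p^k : ℕ) : ZMod M) = nn from rfl] at hγ
    set α : ZMod p := castp (2 * A + B) with hα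
    set β : ZMod p := castp (A + 2 * B) with hβ
    -- nondegeneracy
    have hαβ : ¬ (α = 0 ∧ β = 0) := by
      rintro ⟨ha0, hb0⟩
      have h3A : castp A = 0 := by
        have : (3 : ZMod p) * castp A = 2 * α - β := by
          simp only [hα, hβ, map_add, map_mul, map_ofNat]; ring
        rw [ha0, hb0] at this
        simp only [mul_zero, sub_zero] at this
        rcases mul_eq_zero.mp this with h | h
        · exact absurd h hp3
        · exact h
      have h3B : castp B = 0 := by
        have : (3 : ZMod p) * castp B = 2 * β - α := by
          simp only [hα, hβ, map_add, map_mul, map_ofNat]; ring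
        rw [ha0, hb0] at this
        simp only [mul_zero, sub_zero] at this
        rcases mul_eq_zero.mp this with h | h
        · exact absurd h hp3
        · exact h
      have : castp e = (r : ZMod p) := by
        simp only [he, map_add, map_mul, map_pow, map_intCast, h3A, h3B]
        ring
      rw [hγ, map_mul, hcastpnn, zero_mul] at this
      exact hpr this.symm
    -- the central equivalence
    have central : ∀ s t : ZMod p,
        ((A + nn * ((s.val : ℕ) : ZMod M)) ^ 2
          + (A + nn * ((s.val : ℕ) : ZMod M)) * (B + nn * ((t.val : ℕ) : ZMod M))
          + (B + nn * ((t.val : ℕ) : ZMod M)) ^ 2 = -(r : ZMod M))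
        ↔ α * s + β * t + γ = 0 := by
      intro s t
      set S : ZMod M := ((s.val : ℕ) : ZMod M)
      set Tt : ZMod M := ((t.val : ℕ) : ZMod M)
      have hid : (A + nn * S) ^ 2 + (A + nn * S) * (B + nn * Tt) + (B + nn * Tt) ^ 2
            + (r : ZMod M)
          = nn * (((γ.val : ℕ) : ZMod M) + (S * (2 * A + B) + Tt * (A + 2 * B))) := by
        have expand : (A + nn * S) ^ 2 + (A + nn * S) * (B + nn * Tt) + (B + nn * Tt) ^ 2
              + (r : ZMod M)
            = e + nn * (S * (2 * A + B) + Tt * (A + 2 * B))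
              + (nn * nn) * (S ^ 2 + S * Tt + Tt ^ 2) := by
          rw [he]; ring
        rw [expand, hnn2, zero_mul, add_zero, hγ, mul_add]
        ring
      constructor
      · intro h
        have h0 : nn * (((γ.val : ℕ) : ZMod M) + (S * (2 * A + B) + Tt * (A + 2 * B))) = 0 := by
          rw [← hid, h]; ring
        have := (nn_mul_eq_zero p k hp hk _).mp h0
        rw [map_add, map_add, map_mul, map_mul] at this
        have hS : castp S = s := by
          simp only [S, map_natCast, castp]
          exact ZMod.natCast_rightInverse s
        have hTt : castp Tt = t := by
          simp only [Tt, map_natCast, castp]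
          exact ZMod.natCast_rightInverse t
        have hγc : castp ((γ.val : ℕ) : ZMod M) = γ := by
          simp only [map_natCast, castp]
          exact ZMod.natCast_rightInverse γ
        rw [hS, hTt, hγc] at this
        rw [← hα, ← hβ] at this
        linear_combination this
      · intro h
        have hcast : castp (((γ.val : ℕ) : ZMod M) + (S * (2 * A + B) + Tt * (A + 2 * B))) = 0 := by
          rw [map_add, map_add, map_mul, map_mul]
          have hS : castp S = s := by
            simp only [S, map_natCast, castp]
            exact ZMod.natCast_rightInverse s
          have hTt : castp Tt = t := by
            simp only [Tt, map_natCast, castp]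
            exact ZMod.natCast_rightInverse t
          have hγc : castp ((γ.val : ℕ) : ZMod M) = γ := by
            simp only [map_natCast, castp]
            exact ZMod.natCast_rightInverse γ
          rw [hS, hTt, hγc, ← hα, ← hβ]
          linear_combination h
        have h0 := (nn_mul_eq_zero p k hp hk _).mpr hcast
        rw [← hid] at h0
        linear_combination h0
    -- injectivity of the parametrization of cosets
    have nninj : ∀ s s' : ZMod p,
        nn * ((s.val : ℕ) : ZMod M) = nn * ((s'.val : ℕ) : ZMod M) → s = s' := by
      intro s s' hss
      have h0 : nn * (((s.val : ℕ) : ZMod M) - ((s'.val : ℕ) : ZMod M)) = 0 := by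
        rw [mul_sub, hss, sub_self]
      have := (nn_mul_eq_zero p k hp hk _).mp h0
      rw [map_sub] at this
      have hS : castp ((s.val : ℕ) : ZMod M) = s := by
        simp only [map_natCast, castp]; exact ZMod.natCast_rightInverse s
      have hS' : castp ((s'.val : ℕ) : ZMod M) = s' := by
        simp only [map_natCast, castp]; exact ZMod.natCast_rightInverse s'
      rw [hS, hS'] at this
      exact sub_eq_zero.mp this
    -- the bijection
    rw [← Fintype.card_subtype]
    have hbij : Fintype.card {v : Sm // f v = (w1, w2)} = p := by
      let g : {u : ZMod p × ZMod p // α * u.1 + β * u.2 + γ = 0} → {v : Sm // f v = (w1, w2)} :=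
        fun u => ⟨⟨(A + nn * ((u.1.1.val : ℕ) : ZMod M), B + nn * ((u.1.2.val : ℕ) : ZMod M)),
          (central u.1.1 u.1.2).mpr u.2⟩, by
            simp only [f, Prod.mk.injEq, map_add, map_mul, hcast1nn, zero_mul, add_zero, hcA, hcB]
            try exact ⟨rfl, rfl⟩⟩
      have hgbij : Function.Bijective g := by
        constructor
        · rintro ⟨⟨s, t⟩, hu⟩ ⟨⟨s', t'⟩, hu'⟩ hgg
          have h1 := congrArg (fun v => v.1.1.1) hgg
          have h2 := congrArg (fun v => v.1.1.2) hgg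
          simp only [g] at h1 h2
          have hs : s = s' := nninj s s' (by
            have := h1
            exact add_left_cancel this)
          have ht : t = t' := nninj t t' (by
            have := h2
            exact add_left_cancel this)
          exact Subtype.ext (Prod.ext hs ht)
        · rintro ⟨⟨⟨v1, v2⟩, hv⟩, hfv⟩
          simp only [f, Prod.mk.injEq] at hfv
          have hv1 : cast1 (v1 - A) = 0 := by
            rw [map_sub, hcA, hfv.1, sub_self]
          have hv2 : cast1 (v2 - B) = 0 := by
            rw [map_sub, hcB, hfv.2, sub_self]
          obtain ⟨s, hs⟩ := ker_rep p k hp _ hv1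
          obtain ⟨t, ht⟩ := ker_rep p k hp _ hv2
          have hv1' : v1 = A + nn * ((s.val : ℕ) : ZMod M) := by
            rw [← hs]; ring
          have hv2' : v2 = B + nn * ((t.val : ℕ) : ZMod M) := by
            rw [← ht]; ring
          have hcond : α * s + β * t + γ = 0 := by
            apply (central s t).mp
            rw [← hv1', ← hv2']
            exact hv
          refine ⟨⟨(s, t), hcond⟩, ?_⟩
          apply Subtype.ext
          apply Subtype.ext
          simp only [g]
          exact Prod.ext hv1'.symm hv2'.symm
      have haff := affine_card (K := ZMod p) (γ := γ) hαβ
      rw [ZMod.card] at haff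
      exact (Fintype.card_of_bijective hgbij).symm.trans (by convert haff using 2)
    exact hbij
  rw [hcnt, ← Finset.card_univ, hsplit, Finset.sum_congr rfl hfiber, Finset.sum_const,
    smul_eq_mul, hTcard, mul_comm]

theorem cnt_pow (p : ℕ) (hp : p.Prime) (h3 : ¬ p ∣ 3) {r : ℤ} (hr : ¬ (p:ℤ) ∣ r)
    (k : ℕ) (hk : 1 ≤ k) : (cnt (p ^ k) r : ℤ) = p ^ (k-1) * (p - eps p) := by
  induction k, hk using Nat.le_induction with
  | base => simpa using cnt_prime' p hp h3 hr
  | succ k hk ih =>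
    rw [cnt_lift p hp h3 hr k hk]
    push_cast
    rw [ih]
    have hpow : (p:ℤ) ^ (k-1) * p = p ^ k := by rw [← pow_succ]; congr 1; omega
    rw [← hpow]; ring

/-- Let `N` be a positive integer coprime to `3` and `r` coprime to `N`.  Then the
number of solutions `(a,b) ∈ (ℤ/Nℤ)²` to `a² + ab + b² = −r` equals
`N · ∏_{p | N} (1 − (1/p)·((−3/p)))`, where `((−3/p))` is the Kronecker symbol of
`−3` modulo `p`: it is `1` if `−3` is a nonzero square mod `p`, `−1` if it is a
nonsquare, with the convention `((−3/2)) = −1`. -/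
theorem stmt_5 (N : ℕ) (hN : 0 < N) (h3 : Nat.Coprime N 3) (r : ℤ)
    (hr : Int.gcd r N = 1) :
    ((Nat.card {v : ZMod N × ZMod N //
        v.1 ^ 2 + v.1 * v.2 + v.2 ^ 2 = -(r : ZMod N)} : ℚ))
      = (N : ℚ) * ∏ p ∈ N.primeFactors,
          (1 - (if p = 2 then (-1 : ℚ)
                else if IsSquare (-3 : ZMod p) then 1 else -1) / (p : ℚ)) := by
  have hfact := Nat.multiplicative_factorization (fun n => cnt n r)
    (fun x y h => cnt_mul x y h r) (cnt_one r) hN.ne'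
  have hsupp : N.factorization.support = N.primeFactors := Nat.support_factorization N
  have key : ∀ p ∈ N.primeFactors,
      (cnt (p ^ (N.factorization p)) r : ℚ)
        = (p : ℚ) ^ (N.factorization p) *
          (1 - (if p = 2 then (-1 : ℚ) else if IsSquare (-3 : ZMod p) then 1 else -1) / (p : ℚ)) := by
    intro p hp
    have hpp : p.Prime := Nat.prime_of_mem_primeFactors hp
    have hpN : p ∣ N := Nat.dvd_of_mem_primeFactors hp
    have hp3 : ¬ p ∣ 3 := by
      intro h
      have hcop : Nat.Coprime p 3 := Nat.Coprime.coprime_dvd_left hpN h3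
      have hg := Nat.gcd_eq_left h
      rw [hcop] at hg
      have := hpp.two_le
      omega
    have hp3' : ¬ p ∣ 3 := hp3
    have hpr : ¬ (p:ℤ) ∣ r := by
      intro h
      have h2 : (p : ℤ) ∣ (N : ℤ) := Int.natCast_dvd_natCast.mpr hpN
      have : (p : ℤ) ∣ Int.gcd r N := Int.dvd_coe_gcd h h2
      rw [hr] at this
      have := Int.le_of_dvd one_pos this
      have := hpp.two_le
      omega
    have hk : 1 ≤ N.factorization p := (Nat.Prime.factorization_pos_of_dvd hpp hN.ne' hpN)
    have hq := cnt_pow p hpp hp3 hpr (N.factorization p) hk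
    have hcast : (cnt (p ^ (N.factorization p)) r : ℚ)
        = ((p : ℚ)) ^ (N.factorization p - 1) * ((p : ℚ) - (eps p : ℚ)) := by
      exact_mod_cast congrArg (fun z : ℤ => (z : ℚ)) hq
    rw [hcast]
    have hepsq : (eps p : ℚ)
        = (if p = 2 then (-1 : ℚ) else if IsSquare (-3 : ZMod p) then 1 else -1) := by
      unfold eps; split_ifs <;> norm_num
    rw [hepsq]
    have hp0 : (p : ℚ) ≠ 0 := Nat.cast_ne_zero.mpr hpp.ne_zero
    have hpow : (p : ℚ) ^ (N.factorization p) = (p : ℚ) ^ (N.factorization p - 1) * p := by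
      rw [← pow_succ]; congr 1; omega
    rw [hpow]
    field_simp
  have hNprod : (N : ℚ) = ∏ p ∈ N.primeFactors, (p : ℚ) ^ (N.factorization p) := by
    conv_lhs => rw [← Nat.factorization_prod_pow_eq_self hN.ne']
    rw [Finsupp.prod, hsupp]
    push_cast
    rfl
  have hfact2 : cnt N r = N.factorization.prod fun p k => cnt (p ^ k) r := hfact
  show ((cnt N r : ℚ)) = _
  rw [hfact2, Finsupp.prod, hsupp]
  push_cast
  rw [Finset.prod_congr rfl key, hNprod, ← Finset.prod_mul_distrib]
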